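/- Let p ≥ 2 be an integer and let A be an n×n matrix of rational functions over ℂ such that no entry has a pole at 0 and A(0) is invertible (A is regular at 0). Then there exists an n×n matrix F of functions meromorphic on the open unit disk D(0,1), holomorphic at 0 with F(0) = Iₙ, whose determinant is not identically zero, such that A(z)·F(z) = F(z^p)·A(0) as meromorphic matrices on D(0,1). -/

import Mathlib

open Metric

/-- Evaluation of a rational function over `ℂ` at a point of `ℂ`. -/
noncomputable def ratEval (r : RatFunc ℂ) (z : ℂ) : ℂ := r.eval (RingHom.id ℂ) z

attribute [local instance] Matrix.linftyOpNormedAddCommGroup Matrix.linftyOpNormedRing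
  Matrix.linftyOpNormedAlgebra

namespace MahlerProofAux

open Filter Topology Polynomial

variable {N : ℕ}

/-- Entry extraction as a continuous linear map. -/
noncomputable def entryCLM (N : ℕ) (i j : Fin N) : Matrix (Fin N) (Fin N) ℂ →L[ℂ] ℂ :=
  LinearMap.toContinuousLinearMap
    { toFun := fun X => X i j
      map_add' := fun _ _ => rfl
      map_smul' := fun _ _ => rfl }

@[simp] lemma entryCLM_apply (i j : Fin N) (X : Matrix (Fin N) (Fin N) ℂ) :
    entryCLM N i j X = X i j := rfl

lemma differentiableAt_matrix {f : ℂ → Matrix (Fin N) (Fin N) ℂ} {x : ℂ}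
    (h : ∀ i j, DifferentiableAt ℂ (fun z => f z i j) x) :
    DifferentiableAt ℂ f x := by
  have hf : f = fun z => ∑ i : Fin N, ∑ j : Fin N,
      (f z i j) • Matrix.single i j (1 : ℂ) := by
    funext z
    conv_lhs => rw [Matrix.matrix_eq_sum_single (f z)]
    refine Finset.sum_congr rfl fun i _ => Finset.sum_congr rfl fun j _ => ?_
    rw [Matrix.smul_single, smul_eq_mul, mul_one]
  rw [hf]
  exact DifferentiableAt.fun_sum fun i _ => DifferentiableAt.fun_sum fun j _ => ((h i j).smul_const _)

lemma analyticAt_det {f : ℂ → Matrix (Fin N) (Fin N) ℂ} {x : ℂ}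
    (h : ∀ i j, AnalyticAt ℂ (fun z => f z i j) x) :
    AnalyticAt ℂ (fun z => (f z).det) x := by
  simp only [Matrix.det_apply]
  refine Finset.analyticAt_fun_sum _ fun σ _ => ?_
  have : (fun z => Equiv.Perm.sign σ • ∏ i, f z (σ i) i)
      = fun z => ((Equiv.Perm.sign σ : ℤ) : ℂ) * ∏ i, f z (σ i) i := by
    funext z; simp [Units.smul_def, zsmul_eq_mul]
  rw [this]
  exact analyticAt_const.mul (Finset.analyticAt_fun_prod _ fun i _ => h (σ i) i)

lemma meromorphicAt_sum {ι : Type*} (s : Finset ι) {f : ι → ℂ → ℂ} {x : ℂ}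
    (h : ∀ i ∈ s, MeromorphicAt (f i) x) :
    MeromorphicAt (fun z => ∑ i ∈ s, f i z) x := by
  classical
  induction s using Finset.induction with
  | empty => simp only [Finset.sum_empty]; exact analyticAt_const.meromorphicAt
  | @insert a s hna ih =>
      have h1 : MeromorphicAt (f a) x := h a (Finset.mem_insert_self _ _)
      have h2 : MeromorphicAt (fun z => ∑ i ∈ s, f i z) x :=
        ih fun i hi => h i (Finset.mem_insert_of_mem hi)
      have := h1.add h2
      simp only [Finset.sum_insert hna]; exact this

lemma meromorphicAt_prod {ι : Type*} (s : Finset ι) {f : ι → ℂ → ℂ} {x : ℂ}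
    (h : ∀ i ∈ s, MeromorphicAt (f i) x) :
    MeromorphicAt (fun z => ∏ i ∈ s, f i z) x := by
  classical
  induction s using Finset.induction with
  | empty => simp only [Finset.prod_empty]; exact analyticAt_const.meromorphicAt
  | @insert a s hna ih =>
      have h1 : MeromorphicAt (f a) x := h a (Finset.mem_insert_self _ _)
      have h2 : MeromorphicAt (fun z => ∏ i ∈ s, f i z) x :=
        ih fun i hi => h i (Finset.mem_insert_of_mem hi)
      have := h1.mul h2
      simp only [Finset.prod_insert hna]; exact this

lemma meromorphicAt_det {f : ℂ → Matrix (Fin N) (Fin N) ℂ} {x : ℂ}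
    (h : ∀ i j, MeromorphicAt (fun z => f z i j) x) :
    MeromorphicAt (fun z => (f z).det) x := by
  simp only [Matrix.det_apply]
  refine meromorphicAt_sum _ fun σ _ => ?_
  have : (fun z => Equiv.Perm.sign σ • ∏ i, f z (σ i) i)
      = fun z => ((Equiv.Perm.sign σ : ℤ) : ℂ) * ∏ i, f z (σ i) i := by
    funext z; simp [Units.smul_def, zsmul_eq_mul]
  rw [this]
  exact analyticAt_const.meromorphicAt.mul (meromorphicAt_prod _ fun i _ => h (σ i) i)

lemma ratEval_def (r : RatFunc ℂ) (z : ℂ) :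
    ratEval r z = r.num.eval z / r.denom.eval z := rfl

lemma analyticAt_poly_pow (P : Polynomial ℂ) (q : ℕ) (x : ℂ) :
    AnalyticAt ℂ (fun z => P.eval (z ^ q)) x := by
  have hx : AnalyticAt ℂ (fun z : ℂ => z ^ q) x := analyticAt_id.pow q
  have h := hx.aeval_polynomial P
  have he : ∀ z : ℂ, (Polynomial.aeval (z ^ q)) P = P.eval (z ^ q) := by
    intro z
    rw [Polynomial.aeval_def, Polynomial.eval₂_eq_eval_map,
      show algebraMap ℂ ℂ = RingHom.id ℂ from rfl, Polynomial.map_id]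
  exact h.congr (Filter.Eventually.of_forall fun z => he z)

lemma meromorphicAt_ratEval_pow (r : RatFunc ℂ) (q : ℕ) (x : ℂ) :
    MeromorphicAt (fun z => ratEval r (z ^ q)) x := by
  have h1 := (analyticAt_poly_pow r.num q x).meromorphicAt
  have h2 := (analyticAt_poly_pow r.denom q x).meromorphicAt
  have := h1.div h2
  have he : (fun z : ℂ => ratEval r (z ^ q))
      = (fun z => r.num.eval (z ^ q)) / fun z => r.denom.eval (z ^ q) := by
    funext z; rw [ratEval_def]; rfl
  rwa [he]

lemma analyticAt_ratEval_pow (r : RatFunc ℂ) (q : ℕ) {x : ℂ}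
    (h : r.denom.eval (x ^ q) ≠ 0) :
    AnalyticAt ℂ (fun z => ratEval r (z ^ q)) x := by
  have := (analyticAt_poly_pow r.num q x).div (analyticAt_poly_pow r.denom q x) h
  have he : (fun z : ℂ => ratEval r (z ^ q))
      = fun z => r.num.eval (z ^ q) / r.denom.eval (z ^ q) := by
    funext z; rw [ratEval_def]
  rwa [he]

lemma analyticAt_ratEval (r : RatFunc ℂ) {z : ℂ} (h : r.denom.eval z ≠ 0) :
    AnalyticAt ℂ (fun w => ratEval r w) z := by
  have h1 := analyticAt_ratEval_pow r 1 (x := z) (by simpa using h)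
  have he : (fun z : ℂ => ratEval r (z ^ 1)) = fun w => ratEval r w := by
    funext w; rw [pow_one]
  rwa [he] at h1

/-- The subring of rational functions whose denominator does not vanish at `z`. -/
noncomputable def regAt (z : ℂ) : Subring (RatFunc ℂ) where
  carrier := {r | r.denom.eval z ≠ 0}
  zero_mem' := by simp [Set.mem_setOf_eq]
  one_mem' := by simp [Set.mem_setOf_eq]
  add_mem' := by
    intro a b ha hb
    simp only [Set.mem_setOf_eq] at *
    intro h
    have h2 := Polynomial.eval_eq_zero_of_dvd_of_eval_eq_zero (RatFunc.denom_add_dvd a b) h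
    rw [Polynomial.eval_mul] at h2
    rcases mul_eq_zero.mp h2 with h' | h'
    · exact ha h'
    · exact hb h'
  mul_mem' := by
    intro a b ha hb
    simp only [Set.mem_setOf_eq] at *
    intro h
    have h2 := Polynomial.eval_eq_zero_of_dvd_of_eval_eq_zero (RatFunc.denom_mul_dvd a b) h
    rw [Polynomial.eval_mul] at h2
    rcases mul_eq_zero.mp h2 with h' | h'
    · exact ha h'
    · exact hb h'
  neg_mem' := by
    intro a ha
    simp only [Set.mem_setOf_eq] at *
    intro h
    have hne : (-a) = (-1 : RatFunc ℂ) * a := by ring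
    rw [hne] at h
    have h2 := Polynomial.eval_eq_zero_of_dvd_of_eval_eq_zero (RatFunc.denom_mul_dvd (-1) a) h
    rw [Polynomial.eval_mul] at h2
    have hd1 : ((-1 : RatFunc ℂ)).denom = 1 := by
      have : (-1 : RatFunc ℂ) = algebraMap (Polynomial ℂ) (RatFunc ℂ) (-1) := by
        simp
      rw [this, RatFunc.denom_algebraMap]
    rw [hd1] at h2
    simp only [Polynomial.eval_one, one_mul] at h2
    exact ha h2

lemma mem_regAt {z : ℂ} {r : RatFunc ℂ} : r ∈ regAt z ↔ r.denom.eval z ≠ 0 := Iff.rfl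

/-- Evaluation at `z` as a ring hom on `regAt z`. -/
noncomputable def evalRingHom (z : ℂ) : regAt z →+* ℂ where
  toFun r := ratEval r.1 z
  map_one' := by simp [ratEval]
  map_zero' := by simp [ratEval]
  map_mul' a b := by
    have h := RatFunc.eval_mul (f := RingHom.id ℂ) (a := z) (x := a.1) (y := b.1) a.2 b.2
    simpa [ratEval] using h
  map_add' a b := by
    have h := RatFunc.eval_add (f := RingHom.id ℂ) (a := z) (x := a.1) (y := b.1) a.2 b.2
    simpa [ratEval] using h

lemma evalRingHom_apply (z : ℂ) (r : regAt z) : evalRingHom z r = ratEval r.1 z := rfl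

lemma det_ratEval {n : ℕ} (A : Matrix (Fin n) (Fin n) (RatFunc ℂ)) (z : ℂ)
    (h : ∀ i j, (A i j).denom.eval z ≠ 0) :
    A.det.denom.eval z ≠ 0 ∧
      (Matrix.of fun i j => ratEval (A i j) z).det = ratEval A.det z := by
  classical
  let Ah : Matrix (Fin n) (Fin n) (regAt z) := Matrix.of fun i j => (⟨A i j, h i j⟩ : regAt z)
  have hsub : ((regAt z).subtype.mapMatrix Ah) = A := by ext i j; rfl
  have hd1 : ((Ah.det : regAt z) : RatFunc ℂ) = A.det := by
    have h0 := RingHom.map_det (regAt z).subtype Ah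
    rw [hsub] at h0
    first
      | exact h0
      | exact h0.symm
  have hmem : A.det.denom.eval z ≠ 0 := by rw [← hd1]; exact Ah.det.2
  refine ⟨hmem, ?_⟩
  have hd2 : (evalRingHom z).mapMatrix Ah = Matrix.of fun i j => ratEval (A i j) z := by
    ext i j
    simp only [RingHom.mapMatrix_apply, Matrix.map_apply, Matrix.of_apply]
    rfl
  have h3 := RingHom.map_det (evalRingHom z) Ah
  rw [hd2] at h3
  have h4 : evalRingHom z Ah.det = ratEval A.det z := by
    rw [evalRingHom_apply, hd1]
  first
    | rw [← h3, h4]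
    | rw [h3, h4]

lemma eventually_good {P : Polynomial ℂ} (hP0 : P.eval 0 ≠ 0) {p : ℕ} (hp : 2 ≤ p)
    {z₀ : ℂ} (hz₀ : ‖z₀‖ < 1) :
    ∀ᶠ z in 𝓝[≠] z₀, ∀ k : ℕ, P.eval (z ^ p ^ k) ≠ 0 := by
  have hP : P ≠ 0 := fun h => hP0 (by simp [h])
  set ρ : ℝ := (‖z₀‖ + 1) / 2 with hρdef
  have hρ0 : 0 ≤ ρ := by positivity
  have hρ1 : ρ < 1 := by rw [hρdef]; linarith
  have hzρ : ‖z₀‖ < ρ := by rw [hρdef]; linarith [norm_nonneg z₀]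
  obtain ⟨μ, hμ0, hμ⟩ : ∃ μ : ℝ, 0 < μ ∧ ∀ x : ℂ, P.eval x = 0 → μ ≤ ‖x‖ := by
    have hfin : {x : ℂ | P.IsRoot x}.Finite := Polynomial.finite_setOf_isRoot hP
    classical
    set T : Finset ℝ := insert 1 (hfin.toFinset.image norm) with hT
    have hTne : T.Nonempty := ⟨1, Finset.mem_insert_self _ _⟩
    refine ⟨T.min' hTne, ?_, ?_⟩
    · have hall : ∀ t ∈ T, 0 < t := by
        intro t ht
        rw [hT] at ht
        rcases Finset.mem_insert.mp ht with rfl | ht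
        · norm_num
        · obtain ⟨x, hx, rfl⟩ := Finset.mem_image.mp ht
          have hxr : P.IsRoot x := (Set.Finite.mem_toFinset hfin).mp hx
          have hx0 : x ≠ 0 := by rintro rfl; exact hP0 hxr
          exact norm_pos_iff.mpr hx0
      exact hall _ (T.min'_mem hTne)
    · intro x hx
      have hmem : ‖x‖ ∈ T := by
        rw [hT]
        refine Finset.mem_insert_of_mem (Finset.mem_image.mpr ⟨x, ?_, rfl⟩)
        exact (Set.Finite.mem_toFinset hfin).mpr hx
      exact T.min'_le _ hmem
  obtain ⟨K, hK⟩ : ∃ K : ℕ, ρ ^ K < μ := exists_pow_lt_of_lt_one hμ0 hρ1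
  have hbad : {z : ℂ | ∃ k ≤ K, P.eval (z ^ p ^ k) = 0}.Finite := by
    have hsub : {z : ℂ | ∃ k ≤ K, P.eval (z ^ p ^ k) = 0}
        ⊆ ⋃ k ∈ Finset.range (K + 1), {z : ℂ | (P.comp (Polynomial.X ^ p ^ k)).IsRoot z} := by
      rintro z ⟨k, hk, hz⟩
      have hk' : k ∈ Finset.range (K + 1) := Finset.mem_range.mpr (by omega)
      refine Set.mem_biUnion hk' ?_
      simp only [Set.mem_setOf_eq, Polynomial.IsRoot, Polynomial.eval_comp, Polynomial.eval_pow,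
        Polynomial.eval_X]
      exact hz
    refine Set.Finite.subset (Set.Finite.biUnion (Finset.range (K + 1)).finite_toSet
      fun k _ => Polynomial.finite_setOf_isRoot ?_) hsub
    intro hcomp
    apply hP
    apply Polynomial.funext
    intro w
    obtain ⟨y, hy⟩ : ∃ y : ℂ, y ^ p ^ k = w :=
      IsAlgClosed.exists_pow_nat_eq w (pow_pos (by omega : 0 < p) k)
    have := congrArg (Polynomial.eval y) hcomp
    simpa [Polynomial.eval_comp, hy] using this
  have h1 : ∀ᶠ z in 𝓝[≠] z₀, ‖z‖ < ρ := by
    have : ∀ᶠ z in 𝓝 z₀, ‖z‖ < ρ :=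
      (continuous_norm.continuousAt).eventually_lt continuousAt_const hzρ
    exact this.filter_mono nhdsWithin_le_nhds
  have h2 : ∀ᶠ z in 𝓝[≠] z₀,
      z ∉ ({z : ℂ | ∃ k ≤ K, P.eval (z ^ p ^ k) = 0} \ {z₀}) := by
    have hcl : IsClosed ({z : ℂ | ∃ k ≤ K, P.eval (z ^ p ^ k) = 0} \ {z₀}) :=
      (hbad.subset Set.diff_subset).isClosed
    have : ∀ᶠ z in 𝓝 z₀, z ∈ ({z : ℂ | ∃ k ≤ K, P.eval (z ^ p ^ k) = 0} \ {z₀})ᶜ := by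
      refine hcl.isOpen_compl.eventually_mem ?_
      simp
    exact this.filter_mono nhdsWithin_le_nhds
  have h3 : ∀ᶠ z in 𝓝[≠] z₀, z ≠ z₀ := eventually_mem_nhdsWithin
  filter_upwards [h1, h2, h3] with z hz1 hz2 hz3 k
  intro heval
  by_cases hk : k ≤ K
  · exact hz2 ⟨⟨k, hk, heval⟩, hz3⟩
  · push_neg at hk
    have hμle := hμ _ heval
    have hKk : K ≤ p ^ k := by
      have h1 : k < p ^ k := Nat.lt_pow_self (n := k) (by omega : 1 < p)
      omega
    have hnorm : ‖z ^ p ^ k‖ < μ := by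
      rw [norm_pow]
      calc ‖z‖ ^ p ^ k ≤ ρ ^ p ^ k := pow_le_pow_left₀ (norm_nonneg z) hz1.le _
        _ ≤ ρ ^ K := pow_le_pow_of_le_one hρ0 hρ1.le hKk
        _ < μ := hK
    exact absurd hμle (not_le.mpr hnorm)

noncomputable def Gmat (N p : ℕ) (Bf : ℂ → Matrix (Fin N) (Fin N) ℂ) :
    ℕ → ℂ → Matrix (Fin N) (Fin N) ℂ
  | 0 => fun _ => 1
  | m + 1 => fun z => (Bf z)⁻¹ * Gmat N p Bf m (z ^ p) * Bf 0

noncomputable def Pmat (N p : ℕ) (Bf : ℂ → Matrix (Fin N) (Fin N) ℂ) :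
    ℕ → ℂ → Matrix (Fin N) (Fin N) ℂ
  | 0 => fun _ => 1
  | k + 1 => fun z => (Bf z)⁻¹ * Pmat N p Bf k (z ^ p)

lemma Gmat_shift (N p : ℕ) (Bf : ℂ → Matrix (Fin N) (Fin N) ℂ) :
    ∀ (m₀ m : ℕ) (z : ℂ),
      Gmat N p Bf (m + m₀) z
        = Pmat N p Bf m₀ z * Gmat N p Bf m (z ^ p ^ m₀) * (Bf 0) ^ m₀ := by
  intro m₀
  induction m₀ with
  | zero => intro m z; simp [Pmat, pow_zero, pow_one]
  | succ k ih =>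
      intro m z
      show Gmat N p Bf ((m + k) + 1) z = _
      simp only [Gmat]
      rw [ih m (z ^ p)]
      rw [show ((z ^ p) ^ p ^ k) = z ^ p ^ (k + 1) by
        rw [← pow_mul, pow_succ']]
      rw [Pmat]
      rw [pow_succ]
      noncomm_ring

end MahlerProofAux
open MahlerProofAux Filter Topology

set_option maxHeartbeats 1000000 in
theorem mahler_meromorphic_fundamental_solution_at_zero
    (p n : ℕ) (hp : 2 ≤ p)
    (A : Matrix (Fin n) (Fin n) (RatFunc ℂ))
    (hnopole : ∀ i j, Polynomial.eval (0 : ℂ) (A i j).denom ≠ 0)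
    (hA0 : IsUnit (Matrix.of fun i j => ratEval (A i j) 0).det) :
    ∃ F : Matrix (Fin n) (Fin n) (ℂ → ℂ),
      (∀ i j, MeromorphicOn (F i j) (ball (0 : ℂ) 1)) ∧
      (∀ i j, AnalyticAt ℂ (F i j) 0) ∧
      (Matrix.of fun i j => F i j 0) = 1 ∧
      (∃ z ∈ ball (0 : ℂ) 1, (∀ i j, AnalyticAt ℂ (F i j) z) ∧
        (Matrix.of fun i j => F i j z).det ≠ 0) ∧
      ∀ z ∈ ball (0 : ℂ) 1,
        (∀ i j, Polynomial.eval z (A i j).denom ≠ 0) →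
        (∀ i j, AnalyticAt ℂ (F i j) z) →
        (∀ i j, AnalyticAt ℂ (F i j) (z ^ p)) →
        (Matrix.of fun i j => ratEval (A i j) z) * (Matrix.of fun i j => F i j z)
          = (Matrix.of fun i j => F i j (z ^ p)) *
            (Matrix.of fun i j => ratEval (A i j) 0) := by
  classical
  set Bf : ℂ → Matrix (Fin n) (Fin n) ℂ := fun z => Matrix.of fun i j => ratEval (A i j) z
    with hBfdef
  have hB0 : IsUnit (Bf 0).det := hA0
  have hdet0 := det_ratEval A 0 (fun i j => hnopole i j)
  have hdetBf0 : (Bf 0).det ≠ 0 := hB0.ne_zero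
  have hnum0 : A.det.num.eval 0 ≠ 0 := by
    intro h
    apply hdetBf0
    have := hdet0.2
    rw [ratEval_def, h, zero_div] at this
    exact this
  set Q : Polynomial ℂ := A.det.num * A.det.denom * ∏ i, ∏ j, (A i j).denom with hQdef
  have hQ0 : Q.eval 0 ≠ 0 := by
    simp only [hQdef, Polynomial.eval_mul, Polynomial.eval_prod]
    refine mul_ne_zero (mul_ne_zero hnum0 hdet0.1) ?_
    exact Finset.prod_ne_zero_iff.mpr fun i _ =>
      Finset.prod_ne_zero_iff.mpr fun j _ => hnopole i j
  have hQden : ∀ z : ℂ, Q.eval z ≠ 0 → ∀ i j, (A i j).denom.eval z ≠ 0 := by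
    intro z hz i j h
    apply hz
    simp only [hQdef, Polynomial.eval_mul, Polynomial.eval_prod]
    rw [Finset.prod_eq_zero (Finset.mem_univ i)
      (Finset.prod_eq_zero (Finset.mem_univ j) h)]
    ring
  have hQdet : ∀ z : ℂ, Q.eval z ≠ 0 → (Bf z).det ≠ 0 := by
    intro z hz
    have h1 := det_ratEval A z (hQden z hz)
    have hnum : A.det.num.eval z ≠ 0 := by
      intro h
      apply hz
      simp only [hQdef, Polynomial.eval_mul]
      rw [h]
      ring
    have : (Bf z).det = ratEval A.det z := h1.2
    rw [this, ratEval_def]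
    exact div_ne_zero hnum h1.1
  have hQunit : ∀ z : ℂ, Q.eval z ≠ 0 → IsUnit (Bf z).det :=
    fun z hz => isUnit_iff_ne_zero.mpr (hQdet z hz)
  have hQinv : ∀ z : ℂ, Q.eval z ≠ 0 → Bf z * (Bf z)⁻¹ = 1 ∧ (Bf z)⁻¹ * Bf z = 1 :=
    fun z hz => ⟨Matrix.mul_nonsing_inv _ (hQunit z hz), Matrix.nonsing_inv_mul _ (hQunit z hz)⟩
  have hBfA : ∀ z : ℂ, (∀ i j, (A i j).denom.eval z ≠ 0) →
      ∀ i j, AnalyticAt ℂ (fun w => Bf w i j) z := by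
    intro z hz i j
    exact analyticAt_ratEval (A i j) (hz i j)
  have hCfA : ∀ z : ℂ, Q.eval z ≠ 0 → ∀ i j, AnalyticAt ℂ (fun w => (Bf w)⁻¹ i j) z := by
    intro z hz i j
    have hdetA : AnalyticAt ℂ (fun w => (Bf w).det) z :=
      analyticAt_det (fun a b => hBfA z (hQden z hz) a b)
    have hadjA : AnalyticAt ℂ (fun w => (Bf w).adjugate i j) z := by
      have he : (fun w => (Bf w).adjugate i j)
          = fun w => ((Bf w).updateRow j (Pi.single i 1)).det := by
        funext w; rw [Matrix.adjugate_apply]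
      rw [he]
      refine analyticAt_det fun a b => ?_
      have he2 : (fun w => (Bf w).updateRow j (Pi.single i 1) a b)
          = fun w => if a = j then (Pi.single i 1 : Fin n → ℂ) b else Bf w a b := by
        funext w; rw [Matrix.updateRow_apply]
      rw [he2]
      by_cases hab : a = j
      · simpa [hab] using (analyticAt_const : AnalyticAt ℂ (fun _ : ℂ => (Pi.single i 1 : Fin n → ℂ) b) z)
      · simpa [hab] using hBfA z (hQden z hz) a b
    have hinv : AnalyticAt ℂ (fun w => ((Bf w).det)⁻¹) z := hdetA.inv (hQdet z hz)
    have he3 : (fun w => (Bf w)⁻¹ i j)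
        = fun w => ((Bf w).det)⁻¹ * (Bf w).adjugate i j := by
      funext w
      rw [Matrix.inv_def, Matrix.smul_apply, Ring.inverse_eq_inv, smul_eq_mul]
    rw [he3]
    exact hinv.mul hadjA
  have hCfM : ∀ (q : ℕ) (i j : Fin n) (x : ℂ),
      MeromorphicAt (fun z => (Bf (z ^ q))⁻¹ i j) x := by
    intro q i j x
    have hent : ∀ a b, MeromorphicAt (fun z => Bf (z ^ q) a b) x := fun a b =>
      meromorphicAt_ratEval_pow (A a b) q x
    have hdetM : MeromorphicAt (fun z => (Bf (z ^ q)).det) x := meromorphicAt_det hent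
    have hadjM : MeromorphicAt (fun z => (Bf (z ^ q)).adjugate i j) x := by
      have he : (fun z => (Bf (z ^ q)).adjugate i j)
          = fun z => ((Bf (z ^ q)).updateRow j (Pi.single i 1)).det := by
        funext w; rw [Matrix.adjugate_apply]
      rw [he]
      refine meromorphicAt_det fun a b => ?_
      have he2 : (fun z => (Bf (z ^ q)).updateRow j (Pi.single i 1) a b)
          = fun z => if a = j then (Pi.single i 1 : Fin n → ℂ) b else Bf (z ^ q) a b := by
        funext w; rw [Matrix.updateRow_apply]
      rw [he2]
      by_cases hab : a = j
      · simpa [hab] using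
          (analyticAt_const :
            AnalyticAt ℂ (fun _ : ℂ => (Pi.single i 1 : Fin n → ℂ) b) x).meromorphicAt
      · simpa [hab] using hent a b
    have he3 : (fun z => (Bf (z ^ q))⁻¹ i j)
        = fun z => ((Bf (z ^ q)).det)⁻¹ * (Bf (z ^ q)).adjugate i j := by
      funext w
      rw [Matrix.inv_def, Matrix.smul_apply, Ring.inverse_eq_inv, smul_eq_mul]
    rw [he3]
    exact hdetM.inv.mul hadjM
  -- radius on which Q does not vanish
  obtain ⟨r₁, hr₁pos, hr₁⟩ : ∃ r₁ > 0, ∀ w : ℂ, ‖w‖ < r₁ → Q.eval w ≠ 0 := by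
    have hev : ∀ᶠ w in 𝓝 (0 : ℂ), Q.eval w ≠ 0 :=
      (Q.continuous.continuousAt).eventually_ne hQ0
    obtain ⟨ε, hε, hball⟩ := Metric.eventually_nhds_iff_ball.mp hev
    exact ⟨ε, hε, fun w hw => hball w (by simpa [mem_ball, dist_zero_right] using hw)⟩
  -- linear bound for Cf * B0 - 1 near 0
  set Hf : ℂ → Matrix (Fin n) (Fin n) ℂ := fun w => (Bf w)⁻¹ * Bf 0 - 1 with hHfdef
  have hHf0 : Hf 0 = 0 := by
    show (Bf 0)⁻¹ * Bf 0 - 1 = 0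
    rw [(hQinv 0 hQ0).2, sub_self]
  have hHfdiff : DifferentiableAt ℂ Hf 0 := by
    have h1 : DifferentiableAt ℂ (fun w => (Bf w)⁻¹) 0 :=
      differentiableAt_matrix fun i j => (hCfA 0 hQ0 i j).differentiableAt
    exact (h1.mul_const (Bf 0)).sub_const 1
  obtain ⟨L, hL⟩ := hHfdiff.isBigO_sub.bound
  set L' : ℝ := max L 0 with hL'def
  have hL'0 : 0 ≤ L' := le_max_right _ _
  have hHbound : ∀ᶠ w in 𝓝 (0 : ℂ), ‖Hf w‖ ≤ L' * ‖w‖ := by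
    filter_upwards [hL] with w hw
    simp only [hHf0, sub_zero] at hw
    calc ‖Hf w‖ ≤ L * ‖w‖ := by simpa using hw
      _ ≤ L' * ‖w‖ := mul_le_mul_of_nonneg_right (le_max_left _ _) (norm_nonneg w)
  obtain ⟨δ, hδpos, hδball⟩ := Metric.eventually_nhds_iff_ball.mp hHbound
  have hδ : ∀ w : ℂ, ‖w‖ < δ → ‖Hf w‖ ≤ L' * ‖w‖ := fun w hw =>
    hδball w (by simpa [mem_ball, dist_zero_right] using hw)
  -- preliminary radius and bound for the inverse
  set R₀ : ℝ := min (δ / 2) (min (r₁ / 2) (1 / 2)) with hR₀def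
  have hR₀pos : 0 < R₀ := by
    refine lt_min (by linarith) (lt_min (by linarith) (by norm_num))
  have hR₀δ : R₀ < δ := lt_of_le_of_lt (min_le_left _ _) (by linarith)
  have hR₀r₁ : R₀ < r₁ :=
    lt_of_le_of_lt (le_trans (min_le_right _ _) (min_le_left _ _)) (by linarith)
  have hR₀1 : R₀ ≤ 1 / 2 := le_trans (min_le_right _ _) (min_le_right _ _)
  have hQball : ∀ w : ℂ, ‖w‖ ≤ R₀ → Q.eval w ≠ 0 :=
    fun w hw => hr₁ w (lt_of_le_of_lt hw hR₀r₁)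
  obtain ⟨κ, hκ⟩ : ∃ κ, ∀ w ∈ closedBall (0 : ℂ) R₀, ‖(Bf w)⁻¹‖ ≤ κ := by
    apply (isCompact_closedBall (0 : ℂ) R₀).exists_bound_of_continuousOn
    intro w hw
    have hq := hQball w (by simpa [mem_closedBall, dist_zero_right] using hw)
    exact (differentiableAt_matrix fun i j =>
      (hCfA w hq i j).differentiableAt).continuousAt.continuousWithinAt
  have hκ0 : 0 ≤ κ :=
    le_trans (norm_nonneg _) (hκ 0 (by simp [mem_closedBall, hR₀pos.le]))
  set c : ℝ := κ * ‖Bf 0‖ with hcdef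
  have hc0 : 0 ≤ c := mul_nonneg hκ0 (norm_nonneg _)
  set R : ℝ := min R₀ (1 / (2 * (c + 1))) with hRdef
  have hRpos : 0 < R := lt_min hR₀pos (by positivity)
  have hRR₀ : R ≤ R₀ := min_le_left _ _
  have hR1 : R ≤ 1 := le_trans hRR₀ (by linarith)
  set qr : ℝ := c * R with hqrdef
  have hqr0 : 0 ≤ qr := mul_nonneg hc0 hRpos.le
  have hqr1 : qr < 1 := by
    have h1 : R ≤ 1 / (2 * (c + 1)) := min_le_right _ _
    have h2 : c * R ≤ c * (1 / (2 * (c + 1))) := mul_le_mul_of_nonneg_left h1 hc0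
    have h3 : c * (1 / (2 * (c + 1))) < 1 := by
      rw [mul_one_div, div_lt_one (by positivity)]
      linarith
    calc qr = c * R := rfl
      _ ≤ c * (1 / (2 * (c + 1))) := h2
      _ < 1 := h3
  set G := Gmat n p Bf with hGdef
  set Pm := Pmat n p Bf with hPmdef
  have hG0 : ∀ z : ℂ, G 0 z = 1 := fun z => rfl
  have hGsucc : ∀ (m : ℕ) (z : ℂ), G (m + 1) z = (Bf z)⁻¹ * G m (z ^ p) * Bf 0 :=
    fun m z => rfl
  have hpowR : ∀ z : ℂ, ‖z‖ ≤ R → ‖z ^ p‖ ≤ ‖z‖ := by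
    intro z hz
    rw [norm_pow]
    exact pow_le_of_le_one (norm_nonneg z) (le_trans hz hR1) (by omega)
  -- key norm estimate
  have hclaim : ∀ m : ℕ, ∀ z : ℂ, ‖z‖ ≤ R →
      ‖G (m + 1) z - G m z‖ ≤ L' * c ^ m * ‖z‖ ^ p ^ m := by
    intro m
    induction m with
    | zero =>
        intro z hz
        have h1 : G 1 z - G 0 z = Hf z := by
          rw [hGsucc 0 z, hG0, hG0]
          show (Bf z)⁻¹ * 1 * Bf 0 - 1 = Hf z
          rw [mul_one]
        rw [h1]
        have := hδ z (lt_of_le_of_lt (le_trans hz hRR₀) hR₀δ)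
        simpa [pow_zero, pow_one] using this
    | succ m ih =>
        intro z hz
        have hzR : ‖z ^ p‖ ≤ R := le_trans (hpowR z hz) hz
        have h1 : G (m + 2) z - G (m + 1) z
            = (Bf z)⁻¹ * (G (m + 1) (z ^ p) - G m (z ^ p)) * Bf 0 := by
          rw [hGsucc (m + 1) z, hGsucc m z]
          noncomm_ring
        rw [h1]
        have hκz : ‖(Bf z)⁻¹‖ ≤ κ := hκ z (by
          simp only [mem_closedBall, dist_zero_right]
          exact le_trans hz hRR₀)
        have hih := ih (z ^ p) hzR
        calc ‖(Bf z)⁻¹ * (G (m + 1) (z ^ p) - G m (z ^ p)) * Bf 0‖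
            ≤ ‖(Bf z)⁻¹ * (G (m + 1) (z ^ p) - G m (z ^ p))‖ * ‖Bf 0‖ := norm_mul_le _ _
          _ ≤ ‖(Bf z)⁻¹‖ * ‖G (m + 1) (z ^ p) - G m (z ^ p)‖ * ‖Bf 0‖ :=
              mul_le_mul_of_nonneg_right (norm_mul_le _ _) (norm_nonneg _)
          _ ≤ κ * (L' * c ^ m * ‖z ^ p‖ ^ p ^ m) * ‖Bf 0‖ := by
              refine mul_le_mul_of_nonneg_right ?_ (norm_nonneg _)
              exact mul_le_mul hκz hih (norm_nonneg _) hκ0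
          _ = L' * c ^ (m + 1) * ‖z‖ ^ p ^ (m + 1) := by
              rw [norm_pow, ← pow_mul, ← pow_succ' (p) m]
              rw [hcdef]
              ring
  have hsum : Summable (fun m : ℕ => L' * qr ^ m) :=
    (summable_geometric_of_lt_one hqr0 hqr1).mul_left L'
  have hbound : ∀ (m : ℕ) (z : ℂ), z ∈ closedBall (0 : ℂ) R →
      ‖G (m + 1) z - G m z‖ ≤ L' * qr ^ m := by
    intro m z hz
    rw [mem_closedBall, dist_zero_right] at hz
    calc ‖G (m + 1) z - G m z‖ ≤ L' * c ^ m * ‖z‖ ^ p ^ m := hclaim m z hz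
      _ ≤ L' * c ^ m * R ^ p ^ m := by
          refine mul_le_mul_of_nonneg_left ?_ (by positivity)
          exact pow_le_pow_left₀ (norm_nonneg z) hz _
      _ ≤ L' * c ^ m * R ^ m := by
          refine mul_le_mul_of_nonneg_left ?_ (by positivity)
          exact pow_le_pow_of_le_one hRpos.le hR1
            (le_of_lt (Nat.lt_pow_self (n := m) (by omega : 1 < p)))
      _ = L' * qr ^ m := by rw [hqrdef, mul_pow]; ring
  have htuo : TendstoUniformlyOn
      (fun (N : ℕ) (z : ℂ) => ∑ m ∈ Finset.range N, (G (m + 1) z - G m z))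
      (fun z => ∑' m : ℕ, (G (m + 1) z - G m z)) atTop (closedBall (0 : ℂ) R) :=
    tendstoUniformlyOn_tsum_nat hsum hbound
  set Φ : ℂ → Matrix (Fin n) (Fin n) ℂ :=
    fun z => (∑' m : ℕ, (G (m + 1) z - G m z)) + 1 with hΦdef
  have hGtend : ∀ z ∈ closedBall (0 : ℂ) R, Tendsto (fun m => G m z) atTop (𝓝 (Φ z)) := by
    intro z hz
    have h1 := htuo.tendsto_at hz
    have h2 : (fun N => ∑ m ∈ Finset.range N, (G (m + 1) z - G m z))
        = fun N => G N z - G 0 z := by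
      funext N; exact Finset.sum_range_sub (fun m => G m z) N
    rw [h2] at h1
    have h3 := h1.add (tendsto_const_nhds (x := G 0 z))
    simp only [sub_add_cancel] at h3
    rw [hG0] at h3
    exact h3
  have hGdiff : ∀ (m : ℕ) (z : ℂ), ‖z‖ < R → DifferentiableAt ℂ (G m) z := by
    intro m
    induction m with
    | zero =>
        intro z hz
        exact differentiableAt_const _
    | succ m ih =>
        intro z hz
        have hq' := hQball z (le_trans hz.le hRR₀)
        have h1 : DifferentiableAt ℂ (fun w => (Bf w)⁻¹) z :=
          differentiableAt_matrix fun i j => (hCfA z hq' i j).differentiableAt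
        have h2 : DifferentiableAt ℂ (fun w => G m (w ^ p)) z := by
          have hzp : ‖z ^ p‖ < R := by
            have := hpowR z hz.le
            calc ‖z ^ p‖ ≤ ‖z‖ := this
              _ < R := hz
          exact (ih (z ^ p) hzp).comp z (differentiableAt_id.pow p)
        have he : G (m + 1) = fun w => (Bf w)⁻¹ * G m (w ^ p) * Bf 0 := rfl
        rw [he]
        exact (h1.mul h2).mul_const (Bf 0)
  have hΦdiff : DifferentiableOn ℂ Φ (ball (0 : ℂ) R) := by
    have hS' : DifferentiableOn ℂ (fun z => ∑' m : ℕ, (G (m + 1) z - G m z))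
        (ball (0 : ℂ) R) := by
      apply (htuo.tendstoLocallyUniformlyOn.mono ball_subset_closedBall).differentiableOn
        ?_ isOpen_ball
      refine Eventually.of_forall fun N => ?_
      intro z hz
      rw [mem_ball, dist_zero_right] at hz
      exact (DifferentiableAt.fun_sum fun m _ =>
        ((hGdiff (m + 1) z hz).sub (hGdiff m z hz))).differentiableWithinAt
    exact fun z hz => ((hS' z hz).add (differentiableWithinAt_const _))
  have hΦent : ∀ (i j : Fin n) (w : ℂ), ‖w‖ < R → AnalyticAt ℂ (fun z => Φ z i j) w := by
    intro i j w hw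
    have h1 : DifferentiableOn ℂ (fun z => Φ z i j) (ball (0 : ℂ) R) := by
      intro z hz
      exact ((entryCLM n i j).differentiableAt.comp_differentiableWithinAt z (hΦdiff z hz))
    exact h1.analyticAt (isOpen_ball.mem_nhds (mem_ball_zero_iff.mpr hw))
  have hGlim : ∀ (z : ℂ) (m₀ : ℕ), ‖z ^ p ^ m₀‖ ≤ R →
      Tendsto (fun m => G m z) atTop (𝓝 (Pm m₀ z * Φ (z ^ p ^ m₀) * (Bf 0) ^ m₀)) := by
    intro z m₀ hz
    have h2 := hGtend (z ^ p ^ m₀) (by rwa [mem_closedBall, dist_zero_right])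
    have h3 : (fun m => G (m + m₀) z)
        = fun m => Pm m₀ z * G m (z ^ p ^ m₀) * (Bf 0) ^ m₀ :=
      funext fun m => Gmat_shift n p Bf m₀ m z
    have h1 : Tendsto (fun m => G (m + m₀) z) atTop
        (𝓝 (Pm m₀ z * Φ (z ^ p ^ m₀) * (Bf 0) ^ m₀)) := by
      rw [h3]
      exact (h2.const_mul _).mul_const _
    exact (tendsto_add_atTop_iff_nat m₀).mp h1
  have hex : ∀ z : ℂ, ‖z‖ < 1 → ∃ m₀ : ℕ, ‖z ^ p ^ m₀‖ < R := by
    intro z hz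
    have ht := tendsto_pow_atTop_nhds_zero_of_lt_one (norm_nonneg z) hz
    obtain ⟨m₀, hm₀⟩ := (ht.eventually_lt_const hRpos).exists
    refine ⟨m₀, ?_⟩
    rw [norm_pow]
    calc ‖z‖ ^ p ^ m₀ ≤ ‖z‖ ^ m₀ :=
        pow_le_pow_of_le_one (norm_nonneg z) hz.le
          (le_of_lt (Nat.lt_pow_self (n := m₀) (by omega : 1 < p)))
      _ < R := hm₀
  set Fm : ℂ → Matrix (Fin n) (Fin n) ℂ := fun z => limUnder atTop (fun m => G m z)
    with hFmdef
  have hFmeq : ∀ (z : ℂ) (m₀ : ℕ), ‖z ^ p ^ m₀‖ < R →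
      Fm z = Pm m₀ z * Φ (z ^ p ^ m₀) * (Bf 0) ^ m₀ :=
    fun z m₀ h => (hGlim z m₀ h.le).limUnder_eq
  have hFmtend : ∀ z : ℂ, ‖z‖ < 1 → Tendsto (fun m => G m z) atTop (𝓝 (Fm z)) := by
    intro z hz
    obtain ⟨m₀, hm₀⟩ := hex z hz
    rw [hFmeq z m₀ hm₀]
    exact hGlim z m₀ hm₀.le
  have hFmΦ : ∀ z : ℂ, ‖z‖ < R → Fm z = Φ z := by
    intro z hz
    have h := hFmeq z 0 (by simpa using hz)
    have hPm0 : Pm 0 z = 1 := rfl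
    rw [hPm0] at h
    simpa [pow_zero, pow_one] using h
  -- analyticity at 0 of entries
  have hAnal0 : ∀ i j : Fin n, AnalyticAt ℂ (fun z => Fm z i j) 0 := by
    intro i j
    have hev : (fun z => Φ z i j) =ᶠ[𝓝 (0 : ℂ)] fun z => Fm z i j := by
      have hball : ∀ᶠ z in 𝓝 (0 : ℂ), ‖z‖ < R := by
        filter_upwards [ball_mem_nhds (0 : ℂ) hRpos] with z hz
        exact mem_ball_zero_iff.mp hz
      filter_upwards [hball] with z hz
      rw [hFmΦ z hz]
    exact (hΦent i j 0 (by simpa using hRpos)).congr hev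
  have hF0 : Fm 0 = 1 := by
    have hG01 : ∀ m, G m 0 = 1 := by
      intro m
      induction m with
      | zero => rfl
      | succ m ih =>
          rw [hGsucc m 0, zero_pow (by omega : p ≠ 0), ih, mul_one,
            Matrix.nonsing_inv_mul _ hB0]
    have h1 : Fm 0 = Φ 0 := hFmΦ 0 (by simpa using hRpos)
    have h2 : Tendsto (fun m => G m 0) atTop (𝓝 (Φ 0)) :=
      hGtend 0 (by simp [mem_closedBall, hRpos.le])
    have h2' : Tendsto (fun _ : ℕ => (1 : Matrix (Fin n) (Fin n) ℂ)) atTop (𝓝 (Φ 0)) := by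
      rw [show (fun _ : ℕ => (1 : Matrix (Fin n) (Fin n) ℂ)) = fun m => G m 0 from
        funext fun m => (hG01 m).symm]
      exact h2
    have h3 : Φ 0 = 1 := tendsto_nhds_unique h2' tendsto_const_nhds
    rw [h1, h3]
  -- meromorphy
  have hMero : ∀ (i j : Fin n) (x : ℂ), ‖x‖ < 1 → MeromorphicAt (fun z => Fm z i j) x := by
    intro i j x hx
    obtain ⟨m₀, hm₀⟩ := hex x hx
    have hopen : IsOpen {z : ℂ | ‖z ^ p ^ m₀‖ < R} :=
      isOpen_lt ((continuous_pow (p ^ m₀)).norm) continuous_const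
    have hev : (fun z => (Pm m₀ z * Φ (z ^ p ^ m₀) * (Bf 0) ^ m₀) i j)
        =ᶠ[𝓝 x] fun z => Fm z i j := by
      filter_upwards [hopen.mem_nhds hm₀] with z hz
      rw [hFmeq z m₀ hz]
    have hPmM : ∀ (k' qq : ℕ) (a b : Fin n) (x' : ℂ),
        MeromorphicAt (fun z => Pm k' (z ^ p ^ qq) a b) x' := by
      intro k'
      induction k' with
      | zero =>
          intro qq a b x'
          exact (analyticAt_const :
            AnalyticAt ℂ (fun _ : ℂ => (1 : Matrix (Fin n) (Fin n) ℂ) a b) x').meromorphicAt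
      | succ k' ih =>
          intro qq a b x'
          have hPs : (fun z => Pm (k' + 1) (z ^ p ^ qq) a b)
              = fun z => ∑ l', (Bf (z ^ p ^ qq))⁻¹ a l' * Pm k' (z ^ p ^ (qq + 1)) l' b := by
            funext z
            have h0 : Pm (k' + 1) (z ^ p ^ qq)
                = (Bf (z ^ p ^ qq))⁻¹ * Pm k' ((z ^ p ^ qq) ^ p) := rfl
            rw [h0, Matrix.mul_apply]
            rw [show ((z ^ p ^ qq) ^ p) = z ^ p ^ (qq + 1) by rw [← pow_mul, ← pow_succ]]
          rw [hPs]
          exact meromorphicAt_sum _ fun l' _ =>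
            (hCfM (p ^ qq) a l' x').mul (ih (qq + 1) l' b x')
    have hmodel : MeromorphicAt
        (fun z => (Pm m₀ z * Φ (z ^ p ^ m₀) * (Bf 0) ^ m₀) i j) x := by
      have hexpand : (fun z => (Pm m₀ z * Φ (z ^ p ^ m₀) * (Bf 0) ^ m₀) i j)
          = fun z => ∑ l : Fin n,
              (∑ k : Fin n, Pm m₀ z i k * Φ (z ^ p ^ m₀) k l) * ((Bf 0) ^ m₀) l j := by
        funext z
        simp [Matrix.mul_apply]
      rw [hexpand]
      refine meromorphicAt_sum _ fun l _ => ?_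
      refine MeromorphicAt.mul ?_ (analyticAt_const.meromorphicAt)
      refine meromorphicAt_sum _ fun k _ => ?_
      refine MeromorphicAt.mul ?_ ?_
      · have h := hPmM m₀ 0 i k x
        simpa [pow_zero, pow_one] using h
      · have ha : AnalyticAt ℂ (fun w => Φ w k l) (x ^ p ^ m₀) := hΦent k l _ hm₀
        have hpow : AnalyticAt ℂ (fun z : ℂ => z ^ p ^ m₀) x := analyticAt_id.pow _
        exact (AnalyticAt.comp (f := fun z : ℂ => z ^ p ^ m₀) ha hpow).meromorphicAt
    exact hmodel.congr (hev.filter_mono nhdsWithin_le_nhds)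
  -- assemble
  refine ⟨Matrix.of fun i j => fun z => Fm z i j, ?_, ?_, ?_, ?_, ?_⟩
  · intro i j x hx
    rw [mem_ball, dist_zero_right] at hx
    exact hMero i j x hx
  · intro i j
    exact hAnal0 i j
  · have : (Matrix.of fun i j => (Matrix.of fun i j => fun z => Fm z i j) i j 0) = Fm 0 := by
      ext i j
      simp [Matrix.of_apply]
    rw [this, hF0]
  · refine ⟨0, by simp [mem_ball], fun i j => hAnal0 i j, ?_⟩
    have h1 : (Matrix.of fun i j => (Matrix.of fun i j => fun z => Fm z i j) i j 0) = Fm 0 := by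
      ext i j
      simp [Matrix.of_apply]
    rw [h1, hF0]
    simp
  · intro z hz hden hFz hFzp
    rw [mem_ball, dist_zero_right] at hz
    show Bf z * Fm z = Fm (z ^ p) * Bf 0
    have hgood : ∀ᶠ w in 𝓝[≠] z, ∀ k : ℕ, Q.eval (w ^ p ^ k) ≠ 0 :=
      eventually_good hQ0 hp hz
    have hball : ∀ᶠ w in 𝓝[≠] z, ‖w‖ < 1 := by
      have h1 : ∀ᶠ w in 𝓝 z, ‖w‖ < 1 :=
        (continuous_norm.continuousAt).eventually_lt continuousAt_const hz
      exact h1.filter_mono nhdsWithin_le_nhds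
    have heq : ∀ᶠ w in 𝓝[≠] z, Bf w * Fm w = Fm (w ^ p) * Bf 0 := by
      filter_upwards [hgood, hball] with w hw hw1
      have hw0 : Q.eval w ≠ 0 := by
        have := hw 0
        simpa [pow_zero, pow_one] using this
      have hwp1 : ‖w ^ p‖ < 1 := by
        rw [norm_pow]
        calc ‖w‖ ^ p ≤ ‖w‖ := pow_le_of_le_one (norm_nonneg w) hw1.le (by omega)
          _ < 1 := hw1
      have h1 := hFmtend w hw1
      have h2 := hFmtend (w ^ p) hwp1
      have h3 : ∀ m, Bf w * G (m + 1) w = G m (w ^ p) * Bf 0 := by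
        intro m
        rw [hGsucc m w]
        calc Bf w * ((Bf w)⁻¹ * G m (w ^ p) * Bf 0)
            = (Bf w * (Bf w)⁻¹) * (G m (w ^ p) * Bf 0) := by noncomm_ring
          _ = G m (w ^ p) * Bf 0 := by rw [(hQinv w hw0).1, one_mul]
      have h4 : Tendsto (fun m => Bf w * G (m + 1) w) atTop (𝓝 (Bf w * Fm w)) :=
        (h1.comp (tendsto_add_atTop_nat 1)).const_mul _
      rw [show (fun m => Bf w * G (m + 1) w) = fun m => G m (w ^ p) * Bf 0 from
        funext h3] at h4
      exact tendsto_nhds_unique h4 (h2.mul_const _)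
    have hlhs : ContinuousAt (fun w => Bf w * Fm w) z := by
      have h1 : ContinuousAt Bf z :=
        (differentiableAt_matrix fun i j =>
          (analyticAt_ratEval (A i j) (hden i j)).differentiableAt).continuousAt
      have h2 : ContinuousAt Fm z :=
        (differentiableAt_matrix fun i j => (hFz i j).differentiableAt).continuousAt
      exact h1.mul h2
    have hrhs : ContinuousAt (fun w => Fm (w ^ p) * Bf 0) z := by
      have h3 : ContinuousAt Fm (z ^ p) :=
        (differentiableAt_matrix fun i j => (hFzp i j).differentiableAt).continuousAt
      have hpc : ContinuousAt (fun w : ℂ => w ^ p) z := (continuous_pow p).continuousAt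
      exact (ContinuousAt.comp (f := fun w : ℂ => w ^ p) h3 hpc).mul continuousAt_const
    have t1 : Tendsto (fun w => Bf w * Fm w) (𝓝[≠] z) (𝓝 (Bf z * Fm z)) :=
      hlhs.continuousWithinAt
    have t2 : Tendsto (fun w => Fm (w ^ p) * Bf 0) (𝓝[≠] z) (𝓝 (Fm (z ^ p) * Bf 0)) :=
      hrhs.continuousWithinAt
    exact tendsto_nhds_unique (Filter.Tendsto.congr' heq t1) t2
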